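/- Assume (H). Let σ(x) denote the unique symmetric positive semidefinite square root of the matrix a(x). Then σ is bounded on ℝ^d, globally Hölder continuous with exponent 1/2 on ℝ^d, and locally Lipschitz on ℝ^d \ Γ (with respect to any fixed matrix norm). -/

import Mathlib

open MeasureTheory Real Set
open scoped RealInnerProductSpace ENNReal NNReal

noncomputable section

abbrev Euc (d : ℕ) := EuclideanSpace ℝ (Fin d)

variable {d : ℕ}

/-- gradient of `g` with respect to its first variable -/
def grad1 (g : Euc d → Euc d → ℝ) (y x : Euc d) : Euc d :=
  gradient (fun z => g z x) y

/-- Hessian of `g` with respect to its first variable, as a continuous bilinear map -/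
def hess11 (g : Euc d → Euc d → ℝ) (y x : Euc d) : Euc d →L[ℝ] Euc d →L[ℝ] ℝ :=
  fderiv ℝ (fderiv ℝ (fun z => g z x)) y

/-- set of evolutionary singularities -/
def Gam (g : Euc d → Euc d → ℝ) : Set (Euc d) := {x | grad1 g x x = 0}

def GamAlpha (g : Euc d → Euc d → ℝ) (α : ℝ) : Set (Euc d) :=
  {x | α ≤ Metric.infDist x (Gam g) ∧ ‖x‖ ≤ 1 / α}

/-- `p` is a measurable symmetric probability-density kernel -/
def IsMutKernel (p : Euc d → Euc d → ℝ) : Prop :=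
  Measurable (Function.uncurry p) ∧
  (∀ x h, 0 ≤ p x h) ∧
  (∀ x, Integrable (fun h => p x h)) ∧
  (∀ x, (∫ h, p x h) = 1) ∧
  (∀ x h, p x (-h) = p x h)

/-- Assumption (H2) -/
def H2 (p : Euc d → Euc d → ℝ) : Prop :=
  (∀ x, Integrable (fun h : Euc d => ‖h‖ ^ 3 * p x h)) ∧
  (∃ M : ℝ, ∀ x, (∫ h : Euc d, ‖h‖ ^ 3 * p x h) ≤ M) ∧
  ∃ m : ℝ → ℝ, Measurable m ∧ (∀ r, 0 ≤ m r) ∧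
    Integrable (fun h : Euc d => (‖h‖ ^ 2 ⊔ ‖h‖ ^ 3) * m ‖h‖) ∧
    (∀ x y h, |p x h - p y h| ≤ ‖x - y‖ * m ‖h‖) ∧
    (∀ x h, p x h ≤ m ‖h‖)

/-- Assumption (H1) -/
def H1 (g : Euc d → Euc d → ℝ) : Prop :=
  (∀ x : Euc d, ContDiff ℝ 2 (fun z => g z x)) ∧
  (∃ C : ℝ, ∀ y x : Euc d, ‖grad1 g y x‖ ≤ C) ∧
  (∃ K : ℝ≥0, LipschitzWith K (fun q : Euc d × Euc d => grad1 g q.1 q.2)) ∧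
  (∃ C : ℝ, ∀ y x : Euc d, ‖hess11 g y x‖ ≤ C) ∧
  (∃ K : ℝ≥0, LipschitzWith K (fun q : Euc d × Euc d => hess11 g q.1 q.2))

/-- drift coefficient b -/
def bCoeff (g p : Euc d → Euc d → ℝ) (x : Euc d) : Euc d :=
  (WithLp.equiv 2 (Fin d → ℝ)).symm fun k =>
    ∫ h : Euc d, h k * max (⟪grad1 g x x, h⟫) 0 * p x h

/-- diffusion matrix a -/
def aMat (g p : Euc d → Euc d → ℝ) (x : Euc d) : Matrix (Fin d) (Fin d) ℝ :=
  Matrix.of fun k l => ∫ h : Euc d, h k * h l * max (⟪h, grad1 g x x⟫) 0 * p x h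

/-- second-order drift coefficient b-tilde -/
def btCoeff (g p : Euc d → Euc d → ℝ) (x : Euc d) : Euc d :=
  (WithLp.equiv 2 (Fin d → ℝ)).symm fun k =>
    (1 / 2) * ∫ h in {h : Euc d | 0 < ⟪h, grad1 g x x⟫},
      h k * hess11 g x x h h * p x h

/-- quadratic form sᵀ a(x) s -/
def quadA (g p : Euc d → Euc d → ℝ) (x s : Euc d) : ℝ :=
  ∑ k, ∑ l, s k * aMat g p x k l * s l

/-- quadratic form sᵀ a(x)⁻¹ s -/
def quadAInv (g p : Euc d → Euc d → ℝ) (x s : Euc d) : ℝ :=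
  ∑ k, ∑ l, s k * (aMat g p x)⁻¹ k l * s l

/-- full Hessian of `g` (as a function on the product space) at `(y,x)` -/
def hessF (g : Euc d → Euc d → ℝ) (y x : Euc d) :
    (Euc d × Euc d) →L[ℝ] (Euc d × Euc d) →L[ℝ] ℝ :=
  fderiv ℝ (fderiv ℝ (fun q : Euc d × Euc d => g q.1 q.2)) (y, x)

/-- action of a matrix on a vector of `Euc d` -/
def mulVecE (M : Matrix (Fin d) (Fin d) ℝ) (v : Euc d) : Euc d :=
  (WithLp.equiv 2 (Fin d → ℝ)).symm (M.mulVec (WithLp.equiv 2 (Fin d → ℝ) v))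


namespace Stmt5Aux

variable {d : ℕ}

lemma abs_apply_le_norm (x : Euc d) (k : Fin d) : |x k| ≤ ‖x‖ := by
  rw [EuclideanSpace.norm_eq, ← Real.sqrt_sq_eq_abs]
  apply Real.sqrt_le_sqrt
  have := Finset.single_le_sum (f := fun i => ‖x i‖ ^ 2) (fun i _ => by positivity) (Finset.mem_univ k)
  simpa [sq_abs] using this


lemma mulVecE_apply (M : Matrix (Fin d) (Fin d) ℝ) (v : Euc d) (k : Fin d) :
    mulVecE M v k = ∑ j, M k j * v j := by
  simp [mulVecE, Matrix.mulVec, dotProduct]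

lemma inner_mulVecE (M : Matrix (Fin d) (Fin d) ℝ) (v w : Euc d) :
    ⟪v, mulVecE M w⟫ = ∑ k, ∑ l, v k * M k l * w l := by
  simp [PiLp.inner_apply, mulVecE_apply, Finset.mul_sum, mul_assoc]
  refine Finset.sum_congr rfl fun k _ => ?_
  rw [Finset.sum_mul]
  exact Finset.sum_congr rfl fun l _ => by ring

lemma mulVecE_add (M N : Matrix (Fin d) (Fin d) ℝ) (v : Euc d) :
    mulVecE (M + N) v = mulVecE M v + mulVecE N v := by
  ext k; simp [mulVecE_apply, Matrix.add_apply, Finset.sum_add_distrib, add_mul]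

lemma mulVecE_mul (M N : Matrix (Fin d) (Fin d) ℝ) (v : Euc d) :
    mulVecE (M * N) v = mulVecE M (mulVecE N v) := by
  simp only [mulVecE]
  rw [← Matrix.mulVec_mulVec]
  simp

lemma mulVecE_smul (M : Matrix (Fin d) (Fin d) ℝ) (c : ℝ) (v : Euc d) :
    mulVecE M (c • v) = c • mulVecE M v := by
  ext k
  simp [mulVecE_apply, Finset.mul_sum, mul_left_comm]

lemma inner_mulVecE_symm {M : Matrix (Fin d) (Fin d) ℝ} (hM : M.IsHermitian)
    (v w : Euc d) : ⟪mulVecE M v, w⟫ = ⟪v, mulVecE M w⟫ := by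
  have hsym : ∀ k l, M k l = M l k := fun k l => by simpa using (hM.apply l k)
  rw [inner_mulVecE]
  simp only [PiLp.inner_apply, RCLike.inner_apply, starRingEnd_apply, star_trivial,
    mulVecE_apply, Finset.sum_mul]
  rw [Finset.sum_comm]
  apply Finset.sum_congr rfl; intro k _
  rw [Finset.mul_sum]; apply Finset.sum_congr rfl; intro l _
  rw [hsym k l]; ring

lemma mulVecE_eigen {M : Matrix (Fin d) (Fin d) ℝ} (hM : M.IsHermitian) (j : Fin d) :
    mulVecE M (hM.eigenvectorBasis j) = hM.eigenvalues j • hM.eigenvectorBasis j := by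
  have := hM.mulVec_eigenvectorBasis j
  simp only [mulVecE]
  change (WithLp.equiv 2 (Fin d → ℝ)).symm (M.mulVec (hM.eigenvectorBasis j).ofLp) = _
  rw [this]; rfl

lemma norm_eigenvector {M : Matrix (Fin d) (Fin d) ℝ} (hM : M.IsHermitian) (j : Fin d) :
    ‖hM.eigenvectorBasis j‖ = 1 := hM.eigenvectorBasis.orthonormal.1 j

lemma eigenvalue_eq_inner {M : Matrix (Fin d) (Fin d) ℝ} (hM : M.IsHermitian) (j : Fin d) :
    ⟪hM.eigenvectorBasis j, mulVecE M (hM.eigenvectorBasis j)⟫ = hM.eigenvalues j := by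
  rw [mulVecE_eigen hM j, real_inner_smul_right, real_inner_self_eq_norm_sq,
    norm_eigenvector hM j]
  ring

/-- expansion of the bilinear form in the eigenbasis -/
lemma inner_mulVecE_eq_sum {M : Matrix (Fin d) (Fin d) ℝ} (hM : M.IsHermitian)
    (v w : Euc d) :
    ⟪v, mulVecE M w⟫ = ∑ i, hM.eigenvalues i *
      (hM.eigenvectorBasis.repr v i * hM.eigenvectorBasis.repr w i) := by
  set b := hM.eigenvectorBasis with hb
  conv_lhs => rw [← b.sum_repr w]
  have hlin : mulVecE M (∑ i, b.repr w i • b i) = ∑ i, b.repr w i • mulVecE M (b i) := by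
    have : ∀ (s : Finset (Fin d)), mulVecE M (∑ i ∈ s, b.repr w i • b i)
        = ∑ i ∈ s, b.repr w i • mulVecE M (b i) := by
      intro s
      induction s using Finset.induction with
      | empty => ext k; simp [mulVecE_apply]
      | insert a s' hx ih =>
        rw [Finset.sum_insert hx, Finset.sum_insert hx, ← ih]
        have : mulVecE M (b.repr w a • b a + ∑ i ∈ s', b.repr w i • b i)
            = mulVecE M (b.repr w a • b a) + mulVecE M (∑ i ∈ s', b.repr w i • b i) := by
          ext k; simp [mulVecE_apply, Finset.sum_add_distrib, mul_add]
        rw [this, mulVecE_smul]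
    exact this Finset.univ
  rw [hlin]
  rw [inner_sum]
  apply Finset.sum_congr rfl; intro i _
  rw [mulVecE_eigen hM i, real_inner_smul_right, real_inner_smul_right]
  have h1 : ⟪v, (hM.eigenvectorBasis i)⟫ = b.repr v i := by
    rw [real_inner_comm]; exact (b.repr_apply_apply v i).symm
  rw [h1]; ring


lemma repr_sum_sq {M : Matrix (Fin d) (Fin d) ℝ} (hM : M.IsHermitian) (v : Euc d) :
    ∑ i, (hM.eigenvectorBasis.repr v i) ^ 2 = ‖v‖ ^ 2 := by
  have h1 : ‖hM.eigenvectorBasis.repr v‖ = ‖v‖ := by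
    simp [LinearIsometryEquiv.norm_map]
  rw [← h1, EuclideanSpace.norm_eq]
  rw [Real.sq_sqrt (by positivity)]
  apply Finset.sum_congr rfl; intro i _
  rw [Real.norm_eq_abs, sq_abs]

/-- lower bound on the quadratic form from a lower bound on the eigenvalues -/
lemma quad_lower {M : Matrix (Fin d) (Fin d) ℝ} (hM : M.IsHermitian) (δ : ℝ)
    (hlo : ∀ i, δ ≤ hM.eigenvalues i) (v : Euc d) :
    δ * ‖v‖ ^ 2 ≤ ⟪v, mulVecE M v⟫ := by
  rw [inner_mulVecE_eq_sum hM, ← repr_sum_sq hM v, Finset.mul_sum]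
  apply Finset.sum_le_sum
  intro i _
  have h2 : (0:ℝ) ≤ hM.eigenvectorBasis.repr v i * hM.eigenvectorBasis.repr v i :=
    mul_self_nonneg _
  calc δ * hM.eigenvectorBasis.repr v i ^ 2
      ≤ hM.eigenvalues i * hM.eigenvectorBasis.repr v i ^ 2 := by
        apply mul_le_mul_of_nonneg_right (hlo i) (sq_nonneg _)
    _ = hM.eigenvalues i * (hM.eigenvectorBasis.repr v i * hM.eigenvectorBasis.repr v i) := by
        ring

/-- entrywise bound from a bound on the absolute values of the eigenvalues -/
lemma entry_bound {M : Matrix (Fin d) (Fin d) ℝ} (hM : M.IsHermitian) (c : ℝ)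
    (hup : ∀ i, |hM.eigenvalues i| ≤ c) (k l : Fin d) : |M k l| ≤ c := by
  set b := hM.eigenvectorBasis
  set ek : Euc d := EuclideanSpace.single k 1
  set el : Euc d := EuclideanSpace.single l 1
  have hMkl : M k l = ⟪ek, mulVecE M el⟫ := by
    rw [inner_mulVecE]
    simp [ek, el, EuclideanSpace.single_apply]
  rw [hMkl, inner_mulVecE_eq_sum hM]
  calc |∑ i, hM.eigenvalues i * (b.repr ek i * b.repr el i)|
      ≤ ∑ i, |hM.eigenvalues i * (b.repr ek i * b.repr el i)| := Finset.abs_sum_le_sum_abs _ _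
    _ ≤ ∑ i, c * (|b.repr ek i| * |b.repr el i|) := by
        apply Finset.sum_le_sum; intro i _
        rw [abs_mul, abs_mul]
        apply mul_le_mul_of_nonneg_right (hup i) (by positivity)
    _ = c * ∑ i, |b.repr ek i| * |b.repr el i| := by rw [Finset.mul_sum]
    _ ≤ c * 1 := by
        apply mul_le_mul_of_nonneg_left _ ?hc
        case hc => exact le_trans (abs_nonneg _) (hup k)
        have hcs := Finset.sum_mul_sq_le_sq_mul_sq Finset.univ
          (fun i => |b.repr ek i|) (fun i => |b.repr el i|)
        have h1 : ∑ i, |b.repr ek i| ^ 2 = 1 := by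
          have := repr_sum_sq hM ek
          simp only [sq_abs]
          rw [this]
          simp [ek, EuclideanSpace.norm_single]
        have h2 : ∑ i, |b.repr el i| ^ 2 = 1 := by
          have := repr_sum_sq hM el
          simp only [sq_abs]
          rw [this]
          simp [el, EuclideanSpace.norm_single]
        nlinarith [Finset.sum_nonneg (fun i (_ : i ∈ Finset.univ) => mul_nonneg (abs_nonneg (b.repr ek i)) (abs_nonneg (b.repr el i)))]
    _ = c := mul_one c



lemma mulVecE_sub (M N : Matrix (Fin d) (Fin d) ℝ) (v : Euc d) :
    mulVecE (M - N) v = mulVecE M v - mulVecE N v := by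
  ext k
  simp [mulVecE_apply, Matrix.sub_apply, sub_mul, Finset.sum_sub_distrib]

/-- the key spectral inequality for square roots -/
lemma key_lemma (S T : Matrix (Fin d) (Fin d) ℝ)
    (hS : S.IsHermitian) (hT : T.IsHermitian) (c δ : ℝ) (hδ : 0 ≤ δ)
    (hq : ∀ v : Euc d, ‖v‖ = 1 → |⟪v, mulVecE (S * S - T * T) v⟫| ≤ c)
    (hS' : ∀ v : Euc d, ‖v‖ = 1 → δ ≤ ⟪v, mulVecE S v⟫)
    (hT' : ∀ v : Euc d, ‖v‖ = 1 → δ ≤ ⟪v, mulVecE T v⟫) :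
    ∀ k l : Fin d, |S k l - T k l| ≤ Real.sqrt c ∧
      (0 < δ → |S k l - T k l| ≤ c / (2 * δ)) := by
  have hD : (S - T).IsHermitian := hS.sub hT
  -- bound each eigenvalue of D := S - T
  have heig : ∀ i, hD.eigenvalues i ^ 2 ≤ c ∧ 2 * δ * |hD.eigenvalues i| ≤ c := by
    intro i
    set v := hD.eigenvectorBasis i with hv
    have hvn : ‖v‖ = 1 := norm_eigenvector hD i
    set lam := hD.eigenvalues i with hlam
    have hDv : mulVecE (S - T) v = lam • v := mulVecE_eigen hD i
    -- q := vSv + vTv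
    set qS := ⟪v, mulVecE S v⟫
    set qT := ⟪v, mulVecE T v⟫
    have hqS : δ ≤ qS := hS' v hvn
    have hqT : δ ≤ qT := hT' v hvn
    -- lam = qS - qT
    have hlam_eq : lam = qS - qT := by
      have : ⟪v, mulVecE (S - T) v⟫ = lam * ‖v‖ ^ 2 := by
        rw [hDv, real_inner_smul_right, real_inner_self_eq_norm_sq]
      rw [hvn] at this
      have h2 : ⟪v, mulVecE (S - T) v⟫ = qS - qT := by
        rw [mulVecE_sub, inner_sub_right]
      rw [h2] at this
      simpa using this.symm
    -- key identity: lam * (qS + qT) = ⟪v, (S²-T²) v⟫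
    have hkey : ⟪v, mulVecE (S * S - T * T) v⟫ = lam * (qS + qT) := by
      have hfact : S * S - T * T = S * (S - T) + (S - T) * T := by
        rw [Matrix.mul_sub, Matrix.sub_mul]; abel
      rw [hfact]
      have hadd : mulVecE (S * (S - T) + (S - T) * T) v
          = mulVecE (S * (S - T)) v + mulVecE ((S - T) * T) v := mulVecE_add _ _ _
      rw [hadd, inner_add_right, mulVecE_mul, mulVecE_mul, hDv, mulVecE_smul,
        real_inner_smul_right]
      have h3 : ⟪v, mulVecE (S - T) (mulVecE T v)⟫ = lam * qT := by
        rw [← inner_mulVecE_symm hD, hDv, real_inner_smul_left]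
      rw [h3]; ring
    have habs : |lam| ≤ qS + qT := by
      rw [hlam_eq]
      have h0S : 0 ≤ qS := le_trans hδ hqS
      have h0T : 0 ≤ qT := le_trans hδ hqT
      rw [abs_le]; constructor <;> nlinarith
    have hc := hq v hvn
    rw [hkey, abs_mul] at hc
    have h0 : 0 ≤ qS + qT := by linarith
    rw [abs_of_nonneg h0] at hc
    have hsq : lam ^ 2 = |lam| * |lam| := by rw [← abs_mul, abs_mul_self]; ring
    have hmm := mul_le_mul_of_nonneg_left habs (abs_nonneg lam)
    have hdd : 2 * δ ≤ qS + qT := by linarith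
    have hmm2 := mul_le_mul_of_nonneg_left hdd (abs_nonneg lam)
    constructor
    · linarith
    · linarith
  intro k l
  have h1 : ∀ i, |hD.eigenvalues i| ≤ Real.sqrt c := by
    intro i
    have := (heig i).1
    calc |hD.eigenvalues i| = Real.sqrt (hD.eigenvalues i ^ 2) := (Real.sqrt_sq_eq_abs _).symm
      _ ≤ Real.sqrt c := Real.sqrt_le_sqrt this
  have hb1 := entry_bound hD (Real.sqrt c) h1 k l
  constructor
  · simpa [Matrix.sub_apply] using hb1
  · intro hδpos
    have h2 : ∀ i, |hD.eigenvalues i| ≤ c / (2 * δ) := by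
      intro i
      have := (heig i).2
      rw [le_div_iff₀ (by linarith)]
      linarith
    have hb2 := entry_bound hD (c / (2 * δ)) h2 k l
    simpa [Matrix.sub_apply] using hb2


section Analysis

variable {g p : Euc d → Euc d → ℝ}

lemma meas_p (hker : IsMutKernel p) (x : Euc d) : Measurable fun h : Euc d => p x h :=
  hker.1.comp (measurable_const.prodMk measurable_id)

lemma meas_integrand (hker : IsMutKernel p) (x : Euc d) (k l : Fin d) :
    Measurable fun h : Euc d => h k * h l * max ⟪h, grad1 g x x⟫ 0 * p x h := by
  have mk : Measurable fun h : Euc d => h k := ((continuous_apply k).comp (PiLp.continuous_ofLp 2 _)).measurable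
  have ml : Measurable fun h : Euc d => h l := ((continuous_apply l).comp (PiLp.continuous_ofLp 2 _)).measurable
  have minner : Measurable fun h : Euc d => max ⟪h, grad1 g x x⟫ 0 :=
    ((continuous_id.inner continuous_const).max continuous_const).measurable
  exact ((mk.mul ml).mul minner).mul (meas_p hker x)

lemma abs_max_inner_le (h u : Euc d) (Cg : ℝ) (hCg : ‖u‖ ≤ Cg) :
    |max ⟪h, u⟫ 0| ≤ ‖h‖ * Cg := by
  have h1 : |max ⟪h, u⟫ 0| ≤ |⟪h, u⟫| := by
    rw [abs_of_nonneg (le_max_right _ _)]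
    exact max_le (le_abs_self _) (abs_nonneg _)
  refine le_trans h1 (le_trans (abs_real_inner_le_norm h u) ?_)
  exact mul_le_mul_of_nonneg_left hCg (norm_nonneg h)

lemma abs_integrand_le (hker : IsMutKernel p) (x : Euc d) (k l : Fin d)
    (Cg : ℝ) (hCg : ‖grad1 g x x‖ ≤ Cg) (h : Euc d) :
    |h k * h l * max ⟪h, grad1 g x x⟫ 0 * p x h| ≤ Cg * (‖h‖ ^ 3 * p x h) := by
  have hp0 : 0 ≤ p x h := hker.2.1 x h
  have h1 : |h k| ≤ ‖h‖ := abs_apply_le_norm h k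
  have h2 : |h l| ≤ ‖h‖ := abs_apply_le_norm h l
  have h3 : |max ⟪h, grad1 g x x⟫ 0| ≤ ‖h‖ * Cg := abs_max_inner_le h _ Cg hCg
  have m1 : |h k| * |h l| ≤ ‖h‖ * ‖h‖ :=
    mul_le_mul h1 h2 (abs_nonneg _) (norm_nonneg _)
  have m2 : |h k| * |h l| * |max ⟪h, grad1 g x x⟫ 0| ≤ ‖h‖ * ‖h‖ * (‖h‖ * Cg) :=
    mul_le_mul m1 h3 (abs_nonneg _) (by positivity)
  calc |h k * h l * max ⟪h, grad1 g x x⟫ 0 * p x h|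
      = |h k| * |h l| * |max ⟪h, grad1 g x x⟫ 0| * p x h := by
        rw [abs_mul, abs_mul, abs_mul, abs_of_nonneg hp0]
    _ ≤ ‖h‖ * ‖h‖ * (‖h‖ * Cg) * p x h := mul_le_mul_of_nonneg_right m2 hp0
    _ = Cg * (‖h‖ ^ 3 * p x h) := by ring

lemma integrable_integrand (hker : IsMutKernel p) (hH2 : H2 p) (x : Euc d) (k l : Fin d)
    (Cg : ℝ) (hCg : ‖grad1 g x x‖ ≤ Cg) :
    Integrable (fun h : Euc d => h k * h l * max ⟪h, grad1 g x x⟫ 0 * p x h) := by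
  have hdom : Integrable (fun h : Euc d => Cg * (‖h‖ ^ 3 * p x h)) := (hH2.1 x).const_mul Cg
  refine hdom.mono' (meas_integrand hker x k l).aestronglyMeasurable
    (Filter.Eventually.of_forall fun h => ?_)
  exact abs_integrand_le hker x k l Cg hCg h

/-- entrywise bound on the diffusion matrix -/
lemma aMat_bound (hker : IsMutKernel p) (hH1 : H1 g) (hH2 : H2 p) :
    ∃ Ca : ℝ, 0 ≤ Ca ∧ ∀ (x : Euc d) (k l : Fin d), |aMat g p x k l| ≤ Ca := by
  obtain ⟨hint, ⟨M3, hM3⟩, _⟩ := hH2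
  obtain ⟨_, ⟨Cg0, hCg0⟩, _⟩ := hH1
  set Cg : ℝ := max Cg0 0 with hCgdef
  have hCg : ∀ x : Euc d, ‖grad1 g x x‖ ≤ Cg := fun x => le_trans (hCg0 x x) (le_max_left _ _)
  have hCgnn : 0 ≤ Cg := le_max_right _ _
  have hM3' : ∀ x : Euc d, (0:ℝ) ≤ ∫ h : Euc d, ‖h‖ ^ 3 * p x h := fun x =>
    integral_nonneg fun h => mul_nonneg (by positivity) (hker.2.1 x h)
  refine ⟨Cg * max M3 0, by positivity, fun x k l => ?_⟩
  have hI := integrable_integrand hker ⟨hint, ⟨M3, hM3⟩, ‹_›⟩ x k l Cg (hCg x)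
  calc |aMat g p x k l|
      ≤ ∫ h : Euc d, |h k * h l * max ⟪h, grad1 g x x⟫ 0 * p x h| := by
        have hb := norm_integral_le_integral_norm (μ := volume)
          (fun h : Euc d => h k * h l * max ⟪h, grad1 g x x⟫ 0 * p x h)
        simp only [Real.norm_eq_abs] at hb
        exact hb
    _ ≤ ∫ h : Euc d, Cg * (‖h‖ ^ 3 * p x h) := by
        refine integral_mono hI.abs ((hint x).const_mul Cg)
          fun h => abs_integrand_le hker x k l Cg (hCg x) h
    _ = Cg * ∫ h : Euc d, ‖h‖ ^ 3 * p x h := integral_const_mul _ _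
    _ ≤ Cg * max M3 0 := by
        exact mul_le_mul_of_nonneg_left (le_trans (hM3 x) (le_max_left _ _)) hCgnn

/-- entrywise Lipschitz bound on the diffusion matrix -/
lemma aMat_lip (hker : IsMutKernel p) (hH1 : H1 g) (hH2 : H2 p) :
    ∃ La : ℝ, 0 ≤ La ∧ ∀ (x y : Euc d) (k l : Fin d),
      |aMat g p x k l - aMat g p y k l| ≤ La * ‖x - y‖ := by
  obtain ⟨hint, hM3e, m, hmmeas, hm0, hmint, hmlip, hmbd⟩ := hH2
  obtain ⟨hsm, ⟨Cg0, hCg0⟩, ⟨Kg, hKg⟩, hrest⟩ := hH1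
  set Cg : ℝ := max Cg0 0 with hCgdef
  have hCg : ∀ y x : Euc d, ‖grad1 g y x‖ ≤ Cg := fun y x => le_trans (hCg0 y x) (le_max_left _ _)
  have hCgnn : 0 ≤ Cg := le_max_right _ _
  set Im : ℝ := ∫ h : Euc d, (‖h‖ ^ 2 ⊔ ‖h‖ ^ 3) * m ‖h‖ with hImdef
  have hImnn : 0 ≤ Im := integral_nonneg fun h =>
    mul_nonneg (le_trans (by positivity) (le_max_left (‖h‖^2) (‖h‖^3))) (hm0 _)
  refine ⟨((Kg : ℝ) + Cg) * Im, by positivity, fun x y k l => ?_⟩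
  set u := grad1 g x x with hu
  set v := grad1 g y y with hv
  have hGuv : ‖u - v‖ ≤ (Kg : ℝ) * ‖x - y‖ := by
    have := hKg.dist_le_mul (x, x) (y, y)
    rw [Prod.dist_eq] at this
    simpa [dist_eq_norm, max_self] using this
  have hH2' : H2 p := ⟨hint, hM3e, m, hmmeas, hm0, hmint, hmlip, hmbd⟩
  have hIx := integrable_integrand hker hH2' x k l Cg (hCg x x)
  have hIy := integrable_integrand hker hH2' y k l Cg (hCg y y)
  have hpoint : ∀ h : Euc d,
      |h k * h l * max ⟪h, u⟫ 0 * p x h - h k * h l * max ⟪h, v⟫ 0 * p y h|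
        ≤ (((Kg : ℝ) + Cg) * ‖x - y‖) * ((‖h‖ ^ 2 ⊔ ‖h‖ ^ 3) * m ‖h‖) := by
    intro h
    set a1 := max ⟪h, u⟫ 0 with ha1
    set a2 := max ⟪h, v⟫ 0 with ha2
    have hp1 : 0 ≤ p x h := hker.2.1 x h
    have hp2 : 0 ≤ p y h := hker.2.1 y h
    have ha2nn : 0 ≤ a2 := le_max_right _ _
    have hklh : |h k * h l| ≤ ‖h‖ ^ 2 := by
      rw [abs_mul]
      calc |h k| * |h l| ≤ ‖h‖ * ‖h‖ :=
            mul_le_mul (abs_apply_le_norm h k) (abs_apply_le_norm h l) (abs_nonneg _)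
              (norm_nonneg _)
        _ = ‖h‖ ^ 2 := by ring
    have ha12 : |a1 - a2| ≤ ‖h‖ * ((Kg : ℝ) * ‖x - y‖) := by
      refine le_trans (abs_max_sub_max_le_abs _ _ _) ?_
      have : ⟪h, u⟫ - ⟪h, v⟫ = ⟪h, u - v⟫ := by rw [inner_sub_right]
      rw [this]
      refine le_trans (abs_real_inner_le_norm h (u - v)) ?_
      exact mul_le_mul_of_nonneg_left hGuv (norm_nonneg h)
    have ha2b : a2 ≤ ‖h‖ * Cg := le_trans (le_abs_self _) (abs_max_inner_le h v Cg (hCg y y))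
    have hpb : p x h ≤ m ‖h‖ := hmbd x h
    have hplip : |p x h - p y h| ≤ ‖x - y‖ * m ‖h‖ := hmlip x y h
    have hmnn : 0 ≤ m ‖h‖ := hm0 _
    have step1 : |a1 * p x h - a2 * p y h| ≤
        ‖h‖ * ((Kg : ℝ) * ‖x - y‖) * m ‖h‖ + ‖h‖ * Cg * (‖x - y‖ * m ‖h‖) := by
      have hsplit : a1 * p x h - a2 * p y h = (a1 - a2) * p x h + a2 * (p x h - p y h) := by
        ring
      rw [hsplit]
      refine le_trans (abs_add_le _ _) ?_
      have t1 : |(a1 - a2) * p x h| ≤ ‖h‖ * ((Kg : ℝ) * ‖x - y‖) * m ‖h‖ := by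
        rw [abs_mul, abs_of_nonneg hp1]
        exact mul_le_mul ha12 hpb hp1 (by positivity)
      have t2 : |a2 * (p x h - p y h)| ≤ ‖h‖ * Cg * (‖x - y‖ * m ‖h‖) := by
        rw [abs_mul, abs_of_nonneg ha2nn]
        exact mul_le_mul ha2b hplip (abs_nonneg _) (by positivity)
      linarith
    have hfactor : h k * h l * a1 * p x h - h k * h l * a2 * p y h
        = h k * h l * (a1 * p x h - a2 * p y h) := by ring
    rw [hfactor, abs_mul]
    calc |h k * h l| * |a1 * p x h - a2 * p y h|
        ≤ ‖h‖ ^ 2 * (‖h‖ * ((Kg : ℝ) * ‖x - y‖) * m ‖h‖ + ‖h‖ * Cg * (‖x - y‖ * m ‖h‖)) :=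
          mul_le_mul hklh step1 (abs_nonneg _) (by positivity)
      _ = (((Kg : ℝ) + Cg) * ‖x - y‖) * (‖h‖ ^ 3 * m ‖h‖) := by ring
      _ ≤ (((Kg : ℝ) + Cg) * ‖x - y‖) * ((‖h‖ ^ 2 ⊔ ‖h‖ ^ 3) * m ‖h‖) := by
          refine mul_le_mul_of_nonneg_left ?_ (by positivity)
          exact mul_le_mul_of_nonneg_right (le_max_right _ _) hmnn
  have hdiff : aMat g p x k l - aMat g p y k l =
      ∫ h : Euc d, (h k * h l * max ⟪h, u⟫ 0 * p x h - h k * h l * max ⟪h, v⟫ 0 * p y h) := by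
    rw [integral_sub hIx hIy]; rfl
  rw [hdiff]
  calc |∫ h : Euc d, (h k * h l * max ⟪h, u⟫ 0 * p x h - h k * h l * max ⟪h, v⟫ 0 * p y h)|
      ≤ ∫ h : Euc d, |h k * h l * max ⟪h, u⟫ 0 * p x h - h k * h l * max ⟪h, v⟫ 0 * p y h| := by
        have hb := norm_integral_le_integral_norm (μ := volume)
          (fun h : Euc d => h k * h l * max ⟪h, u⟫ 0 * p x h - h k * h l * max ⟪h, v⟫ 0 * p y h)
        simp only [Real.norm_eq_abs] at hb
        exact hb
    _ ≤ ∫ h : Euc d, (((Kg : ℝ) + Cg) * ‖x - y‖) * ((‖h‖ ^ 2 ⊔ ‖h‖ ^ 3) * m ‖h‖) := by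
        exact integral_mono (hIx.sub hIy).abs (hmint.const_mul _) hpoint
    _ = (((Kg : ℝ) + Cg) * ‖x - y‖) * Im := integral_const_mul _ _
    _ = ((Kg : ℝ) + Cg) * Im * ‖x - y‖ := by ring

end Analysis

section PD

variable {g p : Euc d → Euc d → ℝ}

lemma quadA_integral (hker : IsMutKernel p) (hH2 : H2 p) (x : Euc d)
    (Cg : ℝ) (hCg : ‖grad1 g x x‖ ≤ Cg) (s : Euc d) :
    ⟪s, mulVecE (aMat g p x) s⟫
      = ∫ h : Euc d, ⟪s, h⟫ ^ 2 * max ⟪h, grad1 g x x⟫ 0 * p x h := by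
  rw [inner_mulVecE]
  have h1 : ∀ k l : Fin d, s k * aMat g p x k l * s l
      = ∫ h : Euc d, (s k * s l) * (h k * h l * max ⟪h, grad1 g x x⟫ 0 * p x h) := by
    intro k l
    rw [integral_const_mul]
    have h2 : aMat g p x k l = ∫ h : Euc d, h k * h l * max ⟪h, grad1 g x x⟫ 0 * p x h := rfl
    rw [h2]; ring
  calc ∑ k, ∑ l, s k * aMat g p x k l * s l
      = ∑ k, ∑ l, ∫ h : Euc d, (s k * s l) * (h k * h l * max ⟪h, grad1 g x x⟫ 0 * p x h) :=
        Finset.sum_congr rfl fun k _ => Finset.sum_congr rfl fun l _ => h1 k l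
    _ = ∑ q ∈ (Finset.univ ×ˢ Finset.univ : Finset (Fin d × Fin d)),
          ∫ h : Euc d, (s q.1 * s q.2) * (h q.1 * h q.2 * max ⟪h, grad1 g x x⟫ 0 * p x h) := by
        rw [Finset.sum_product]
    _ = ∫ h : Euc d, ∑ q ∈ (Finset.univ ×ˢ Finset.univ : Finset (Fin d × Fin d)),
          (s q.1 * s q.2) * (h q.1 * h q.2 * max ⟪h, grad1 g x x⟫ 0 * p x h) := by
        rw [← integral_finset_sum]
        intro q _
        exact (integrable_integrand hker hH2 x q.1 q.2 Cg hCg).const_mul _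
    _ = ∫ h : Euc d, ⟪s, h⟫ ^ 2 * max ⟪h, grad1 g x x⟫ 0 * p x h := by
        congr 1; funext h
        rw [Finset.sum_product]
        have hsh : ⟪s, h⟫ = ∑ i, s i * h i := by
          simp [PiLp.inner_apply]
          exact Finset.sum_congr rfl fun i _ => mul_comm _ _
        rw [hsh, sq, Finset.sum_mul_sum]
        simp only [Finset.sum_mul]
        exact Finset.sum_congr rfl fun k _ => Finset.sum_congr rfl fun l _ => by ring

lemma null_hyperplane {w : Euc d} (hw : w ≠ 0) :
    volume {h : Euc d | ⟪w, h⟫ = 0} = 0 := by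
  have hker : {h : Euc d | ⟪w, h⟫ = 0}
      = (LinearMap.ker ((innerSL ℝ w : Euc d →L[ℝ] ℝ).toLinearMap) : Set (Euc d)) := by
    ext h
    simp [LinearMap.mem_ker]
  rw [hker]
  apply MeasureTheory.Measure.addHaar_submodule
  intro htop
  have hmem : w ∈ LinearMap.ker ((innerSL ℝ w : Euc d →L[ℝ] ℝ).toLinearMap) := by
    rw [htop]; trivial
  have : ⟪w, w⟫ = 0 := by simpa using hmem
  exact hw (inner_self_eq_zero.mp this)

lemma aMat_posdef (hker : IsMutKernel p) (hH2 : H2 p)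
    {x : Euc d} (hx : grad1 g x x ≠ 0)
    (Cg : ℝ) (hCg : ‖grad1 g x x‖ ≤ Cg)
    (s : Euc d) (hs : s ≠ 0) :
    0 < ⟪s, mulVecE (aMat g p x) s⟫ := by
  rw [quadA_integral hker hH2 x Cg hCg s]
  set u := grad1 g x x with hu
  set f : Euc d → ℝ := fun h => ⟪s, h⟫ ^ 2 * max ⟪h, u⟫ 0 * p x h with hf
  have hp0 : ∀ h, 0 ≤ p x h := hker.2.1 x
  have hf0 : 0 ≤ f := fun h =>
    mul_nonneg (mul_nonneg (sq_nonneg _) (le_max_right _ _)) (hp0 h)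
  have hfmeas : Measurable f := by
    have m1 : Measurable fun h : Euc d => ⟪s, h⟫ ^ 2 :=
      ((continuous_const.inner continuous_id).pow 2).measurable
    have m2 : Measurable fun h : Euc d => max ⟪h, u⟫ 0 :=
      ((continuous_id.inner continuous_const).max continuous_const).measurable
    exact (m1.mul m2).mul (meas_p hker x)
  have hfint : Integrable f := by
    have hdom : Integrable (fun h : Euc d => (‖s‖ ^ 2 * Cg) * (‖h‖ ^ 3 * p x h)) :=
      (hH2.1 x).const_mul _
    refine hdom.mono' hfmeas.aestronglyMeasurable (Filter.Eventually.of_forall fun h => ?_)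
    have b1 : ⟪s, h⟫ ^ 2 ≤ ‖s‖ ^ 2 * ‖h‖ ^ 2 := by
      have := abs_real_inner_le_norm s h
      nlinarith [sq_abs (⟪s, h⟫ : ℝ), abs_nonneg (⟪s, h⟫ : ℝ), norm_nonneg s, norm_nonneg h]
    have b2 : |max ⟪h, u⟫ 0| ≤ ‖h‖ * Cg := abs_max_inner_le h u Cg hCg
    have hb2' : max ⟪h, u⟫ 0 ≤ ‖h‖ * Cg := le_trans (le_abs_self _) b2
    have : f h ≤ (‖s‖ ^ 2 * Cg) * (‖h‖ ^ 3 * p x h) := by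
      have c1 : ⟪s, h⟫ ^ 2 * max ⟪h, u⟫ 0 ≤ (‖s‖ ^ 2 * ‖h‖ ^ 2) * (‖h‖ * Cg) :=
        mul_le_mul b1 hb2' (le_max_right _ _) (by positivity)
      have c2 := mul_le_mul_of_nonneg_right c1 (hp0 h)
      calc f h = ⟪s, h⟫ ^ 2 * max ⟪h, u⟫ 0 * p x h := rfl
        _ ≤ (‖s‖ ^ 2 * ‖h‖ ^ 2) * (‖h‖ * Cg) * p x h := c2
        _ = (‖s‖ ^ 2 * Cg) * (‖h‖ ^ 3 * p x h) := by ring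
    calc ‖f h‖ = f h := by rw [Real.norm_eq_abs, abs_of_nonneg (hf0 h)]
      _ ≤ (‖s‖ ^ 2 * Cg) * (‖h‖ ^ 3 * p x h) := this
  rw [integral_pos_iff_support_of_nonneg hf0 hfint]
  by_contra hns
  have hsupp0 : volume (Function.support f) = 0 := le_zero_iff.mp (not_lt.mp hns)
  have hfae : ∀ᵐ h : Euc d, f h = 0 := by
    rw [ae_iff]
    have he : {h : Euc d | ¬ f h = 0} = Function.support f := rfl
    rw [he]; exact hsupp0
  have hsnull : volume {h : Euc d | ⟪s, h⟫ = 0} = 0 := null_hyperplane hs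
  have hsae : ∀ᵐ h : Euc d, (⟪s, h⟫ : ℝ) ≠ 0 := by
    rw [ae_iff]
    have he : {h : Euc d | ¬ (⟪s, h⟫ : ℝ) ≠ 0} = {h : Euc d | (⟪s, h⟫ : ℝ) = 0} := by
      ext h; simp
    rw [he]; exact hsnull
  -- decomposition of p x into three parts
  set G : Euc d → ℝ := fun h => if 0 < ⟪h, u⟫ then p x h else 0 with hG
  set G' : Euc d → ℝ := fun h => if ⟪h, u⟫ < 0 then p x h else 0 with hG'
  set G0 : Euc d → ℝ := fun h => if ⟪h, u⟫ = 0 then p x h else 0 with hG0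
  have innermeas : Measurable fun h : Euc d => (⟪h, u⟫ : ℝ) :=
    (continuous_id.inner continuous_const).measurable
  have hGmeas : Measurable G :=
    Measurable.ite (measurableSet_lt measurable_const innermeas) (meas_p hker x)
      measurable_const
  have hG'meas : Measurable G' :=
    Measurable.ite (measurableSet_lt innermeas measurable_const) (meas_p hker x)
      measurable_const
  have hG0meas : Measurable G0 :=
    Measurable.ite (measurableSet_eq_fun innermeas measurable_const) (meas_p hker x)
      measurable_const
  have hpint : Integrable (fun h => p x h) := hker.2.2.1 x
  have hdomG : ∀ (F : Euc d → ℝ), (∀ h, F h = p x h ∨ F h = 0) → Measurable F →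
      Integrable F := by
    intro F hF hFm
    refine hpint.mono' hFm.aestronglyMeasurable (Filter.Eventually.of_forall fun h => ?_)
    rcases hF h with h1 | h1 <;> rw [Real.norm_eq_abs, h1]
    · rw [abs_of_nonneg (hp0 h)]
    · simpa using hp0 h
  have hGor : ∀ h : Euc d, G h = p x h ∨ G h = 0 := fun h => by
    simp only [G]; split
    · exact Or.inl rfl
    · exact Or.inr rfl
  have hG'or : ∀ h : Euc d, G' h = p x h ∨ G' h = 0 := fun h => by
    simp only [G']; split
    · exact Or.inl rfl
    · exact Or.inr rfl
  have hG0or : ∀ h : Euc d, G0 h = p x h ∨ G0 h = 0 := fun h => by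
    simp only [G0]; split
    · exact Or.inl rfl
    · exact Or.inr rfl
  have hGint : Integrable G := hdomG G hGor hGmeas
  have hG'int : Integrable G' := hdomG G' hG'or hG'meas
  have hG0int : Integrable G0 := hdomG G0 hG0or hG0meas
  -- G vanishes a.e.
  have hGae : ∀ᵐ h : Euc d, G h = 0 := by
    filter_upwards [hfae, hsae] with h hfh hsh
    by_cases hc : 0 < (⟪h, u⟫ : ℝ)
    · have hmax : max (⟪h, u⟫ : ℝ) 0 = ⟪h, u⟫ := max_eq_left hc.le
      have hpos : 0 < (⟪s, h⟫ : ℝ) ^ 2 * max (⟪h, u⟫ : ℝ) 0 := by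
        rw [hmax]
        exact mul_pos (by positivity) hc
      have hpz : p x h = 0 := by
        rcases mul_eq_zero.mp hfh with h1 | h1
        · exact absurd h1 (ne_of_gt hpos)
        · exact h1
      simp only [G]; rw [if_pos hc, hpz]
    · simp only [G]; rw [if_neg hc]
  have hGzero : ∫ h : Euc d, G h = 0 := integral_eq_zero_of_ae hGae
  -- G0 vanishes a.e.
  have hG0ae : ∀ᵐ h : Euc d, G0 h = 0 := by
    have hunull : volume {h : Euc d | (⟪u, h⟫ : ℝ) = 0} = 0 := null_hyperplane hx
    have huae : ∀ᵐ h : Euc d, (⟪u, h⟫ : ℝ) ≠ 0 := by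
      rw [ae_iff]
      have he : {h : Euc d | ¬ (⟪u, h⟫ : ℝ) ≠ 0} = {h : Euc d | (⟪u, h⟫ : ℝ) = 0} := by
        ext h; simp
      rw [he]; exact hunull
    filter_upwards [huae] with h hne
    simp only [G0]
    exact if_neg (fun hz => hne (by rw [real_inner_comm]; exact hz))
  have hG0zero : ∫ h : Euc d, G0 h = 0 := integral_eq_zero_of_ae hG0ae
  -- G' has the same integral as G by symmetry
  have hG'eq : ∀ h : Euc d, G (-h) = G' h := by
    intro h
    have h1 : (⟪-h, u⟫ : ℝ) = -⟪h, u⟫ := inner_neg_left h u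
    have h2 : p x (-h) = p x h := hker.2.2.2.2 x h
    by_cases hc : (⟪h, u⟫ : ℝ) < 0
    · have hpos : 0 < (⟪-h, u⟫ : ℝ) := by rw [h1]; linarith
      simp only [G, G']
      rw [if_pos hpos, if_pos hc, h2]
    · have hneg : ¬ (0 < (⟪-h, u⟫ : ℝ)) := by rw [h1]; linarith [not_lt.mp hc]
      simp only [G, G']
      rw [if_neg hneg, if_neg hc]
  have hG'zero : ∫ h : Euc d, G' h = 0 := by
    have he1 : ∫ h : Euc d, G' h = ∫ h : Euc d, G (-h) :=
      integral_congr_ae (Filter.Eventually.of_forall fun h => (hG'eq h).symm)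
    rw [he1, integral_neg_eq_self G (volume : Measure (Euc d)), hGzero]
  -- contradiction with ∫ p = 1
  have hdecomp : ∀ h : Euc d, p x h = G h + G' h + G0 h := by
    intro h
    simp only [G, G', G0]
    rcases lt_trichotomy (⟪h, u⟫ : ℝ) 0 with h1 | h1 | h1
    · rw [if_neg (asymm h1), if_pos h1, if_neg h1.ne]; ring
    · rw [if_neg (show ¬ (0 < (⟪h, u⟫ : ℝ)) by rw [h1]; exact lt_irrefl 0),
        if_neg (show ¬ ((⟪h, u⟫ : ℝ) < 0) by rw [h1]; exact lt_irrefl 0), if_pos h1]; ring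
    · rw [if_pos h1, if_neg (asymm h1), if_neg h1.ne']; ring
  have hone : (1:ℝ) = ∫ h : Euc d, (G h + G' h + G0 h) := by
    rw [← hker.2.2.2.1 x]
    exact integral_congr_ae (Filter.Eventually.of_forall hdecomp)
  have i1 : Integrable (fun h : Euc d => G h + G' h) := hGint.add hG'int
  have e1 : ∫ h : Euc d, (G h + G' h + G0 h)
      = (∫ h : Euc d, (G h + G' h)) + ∫ h : Euc d, G0 h := integral_add i1 hG0int
  have e2 : ∫ h : Euc d, (G h + G' h) = (∫ h : Euc d, G h) + ∫ h : Euc d, G' h :=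
    integral_add hGint hG'int
  rw [e1, e2, hGzero, hG'zero, hG0zero] at hone
  norm_num at hone

end PD

section Bridge

lemma norm_sq_eucl (v : Euc d) : ‖v‖ ^ 2 = ∑ i, v i ^ 2 := by
  rw [EuclideanSpace.norm_eq, Real.sq_sqrt (by positivity)]
  exact Finset.sum_congr rfl fun i _ => by rw [Real.norm_eq_abs, sq_abs]

lemma psd_quad_nonneg {S : Matrix (Fin d) (Fin d) ℝ} (hS : S.PosSemidef) (v : Euc d) :
    0 ≤ ⟪v, mulVecE S v⟫ := by
  have h := hS.dotProduct_mulVec_nonneg (fun i => v i)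
  rw [inner_mulVecE]
  simpa [dotProduct, Matrix.mulVec, Finset.mul_sum, mul_assoc] using h

lemma quad_diff_bound {g p : Euc d → Euc d → ℝ} (La : ℝ) (hLa0 : 0 ≤ La)
    (hLa : ∀ (x y : Euc d) (k l : Fin d), |aMat g p x k l - aMat g p y k l| ≤ La * ‖x - y‖)
    (x y : Euc d) (v : Euc d) :
    |⟪v, mulVecE (aMat g p x - aMat g p y) v⟫| ≤ (d * (La * ‖x - y‖)) * ‖v‖ ^ 2 := by
  rw [inner_mulVecE]
  have habs : ∀ k l : Fin d, |v k * (aMat g p x - aMat g p y) k l * v l|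
      ≤ |v k| * (La * ‖x - y‖) * |v l| := by
    intro k l
    rw [abs_mul, abs_mul]
    have h1 : |(aMat g p x - aMat g p y) k l| ≤ La * ‖x - y‖ := by
      simpa [Matrix.sub_apply] using hLa x y k l
    exact mul_le_mul_of_nonneg_right
      (mul_le_mul_of_nonneg_left h1 (abs_nonneg _)) (abs_nonneg _)
  calc |∑ k, ∑ l, v k * (aMat g p x - aMat g p y) k l * v l|
      ≤ ∑ k, ∑ l, |v k * (aMat g p x - aMat g p y) k l * v l| := by
        refine le_trans (Finset.abs_sum_le_sum_abs _ _) ?_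
        exact Finset.sum_le_sum fun k _ => Finset.abs_sum_le_sum_abs _ _
    _ ≤ ∑ k, ∑ l, |v k| * (La * ‖x - y‖) * |v l| :=
        Finset.sum_le_sum fun k _ => Finset.sum_le_sum fun l _ => habs k l
    _ = (La * ‖x - y‖) * (∑ k, |v k|) ^ 2 := by
        rw [sq, Finset.sum_mul_sum, Finset.mul_sum]
        refine Finset.sum_congr rfl fun k _ => ?_
        rw [Finset.mul_sum]
        exact Finset.sum_congr rfl fun l _ => by ring
    _ ≤ (La * ‖x - y‖) * (d * ‖v‖ ^ 2) := by
        refine mul_le_mul_of_nonneg_left ?_ (by positivity)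
        have hcs := Finset.sum_mul_sq_le_sq_mul_sq Finset.univ
          (fun _ : Fin d => (1:ℝ)) (fun k => |v k|)
        have h2 : ∑ k : Fin d, |v k| ^ 2 = ‖v‖ ^ 2 := by
          rw [norm_sq_eucl]
          exact Finset.sum_congr rfl fun i _ => sq_abs _
        simp only [one_pow, one_mul, Finset.sum_const, Finset.card_univ,
          Fintype.card_fin, nsmul_eq_mul] at hcs
        rw [h2] at hcs
        linarith [hcs]
    _ = (d * (La * ‖x - y‖)) * ‖v‖ ^ 2 := by ring

lemma herm_of_sq {S A : Matrix (Fin d) (Fin d) ℝ} (hS : S.IsHermitian)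
    (h : S * S = A) : A.IsHermitian := by
  rw [← h]
  unfold Matrix.IsHermitian
  rw [Matrix.conjTranspose_mul, hS.eq]

end Bridge

end Stmt5Aux

open Stmt5Aux

theorem stmt5 {d : ℕ} (hd : 1 ≤ d) (g p : Euc d → Euc d → ℝ)
    (hker : IsMutKernel p) (hH1 : H1 g) (hH2 : H2 p)
    (σ : Euc d → Matrix (Fin d) (Fin d) ℝ)
    (hσ : ∀ x : Euc d, (σ x).PosSemidef ∧ σ x * σ x = aMat g p x) :
    (∃ C : ℝ, ∀ (x : Euc d) (k l : Fin d), |σ x k l| ≤ C) ∧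
    (∃ C : ℝ, ∀ (x y : Euc d) (k l : Fin d),
      |σ x k l - σ y k l| ≤ C * ‖x - y‖ ^ ((1 : ℝ) / 2)) ∧
    (∀ x : Euc d, x ∉ Gam g → ∃ ε : ℝ, 0 < ε ∧ ∃ L : ℝ,
      ∀ y ∈ Metric.ball x ε, ∀ z ∈ Metric.ball x ε, ∀ k l : Fin d,
        |σ y k l - σ z k l| ≤ L * ‖y - z‖) := by
  obtain ⟨Ca, hCa0, hCa⟩ := aMat_bound hker hH1 hH2
  obtain ⟨La, hLa0, hLa⟩ := aMat_lip hker hH1 hH2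
  have hherm : ∀ x : Euc d, (σ x).IsHermitian := fun x => (hσ x).1.1
  have hCgE : ∃ Cg : ℝ, ∀ z : Euc d, ‖grad1 g z z‖ ≤ Cg := by
    obtain ⟨_, ⟨Cg0, hCg0⟩, _⟩ := hH1
    exact ⟨Cg0, fun z => hCg0 z z⟩
  obtain ⟨Cg, hCg⟩ := hCgE
  refine ⟨?_, ?_, ?_⟩
  -- Part 1: boundedness
  · refine ⟨Real.sqrt Ca, fun x k l => ?_⟩
    have hkk : (σ x * σ x) k k = ∑ j, σ x k j ^ 2 := by
      rw [Matrix.mul_apply]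
      refine Finset.sum_congr rfl fun j _ => ?_
      have hs : σ x j k = σ x k j := by simpa using ((hherm x).apply j k).symm
      rw [hs, sq]
    have h1 : σ x k l ^ 2 ≤ aMat g p x k k := by
      rw [← (hσ x).2, hkk]
      exact Finset.single_le_sum (f := fun j => σ x k j ^ 2) (fun j _ => sq_nonneg _)
        (Finset.mem_univ l)
    have h2 : σ x k l ^ 2 ≤ Ca := le_trans h1 (le_trans (le_abs_self _) (hCa x k k))
    calc |σ x k l| = Real.sqrt (σ x k l ^ 2) := (Real.sqrt_sq_eq_abs _).symm
      _ ≤ Real.sqrt Ca := Real.sqrt_le_sqrt h2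
  -- Part 2: Hölder continuity
  · refine ⟨Real.sqrt (d * La), fun x y k l => ?_⟩
    have hq : ∀ v : Euc d, ‖v‖ = 1 →
        |⟪v, mulVecE (σ x * σ x - σ y * σ y) v⟫| ≤ d * (La * ‖x - y‖) := by
      intro v hv
      rw [(hσ x).2, (hσ y).2]
      have := quad_diff_bound La hLa0 hLa x y v
      rw [hv] at this
      simpa using this
    have h0S : ∀ v : Euc d, ‖v‖ = 1 → (0:ℝ) ≤ ⟪v, mulVecE (σ x) v⟫ :=
      fun v _ => psd_quad_nonneg (hσ x).1 v
    have h0T : ∀ v : Euc d, ‖v‖ = 1 → (0:ℝ) ≤ ⟪v, mulVecE (σ y) v⟫ :=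
      fun v _ => psd_quad_nonneg (hσ y).1 v
    have hkey := (key_lemma (σ x) (σ y) (hherm x) (hherm y)
      (d * (La * ‖x - y‖)) 0 le_rfl hq h0S h0T k l).1
    have hsqrt : Real.sqrt (d * (La * ‖x - y‖))
        = Real.sqrt (d * La) * ‖x - y‖ ^ ((1:ℝ)/2) := by
      rw [show (d : ℝ) * (La * ‖x - y‖) = (d * La) * ‖x - y‖ by ring,
        Real.sqrt_mul (by positivity), Real.sqrt_eq_rpow, Real.sqrt_eq_rpow]
    rw [hsqrt] at hkey
    exact hkey
  -- Part 3: local Lipschitz continuity away from Γ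
  · intro x hx
    have hgx : grad1 g x x ≠ 0 := fun hz => hx hz
    -- positive definiteness of a(x)
    have hAh : ∀ z : Euc d, (aMat g p z).IsHermitian :=
      fun z => herm_of_sq (hherm z) (hσ z).2
    obtain ⟨i0, -, hmin⟩ := Finset.exists_min_image Finset.univ
      (fun i => (hAh x).eigenvalues i) ⟨⟨0, hd⟩, Finset.mem_univ _⟩
    set μ0 := (hAh x).eigenvalues i0 with hμ0
    have hμ0pos : 0 < μ0 := by
      rw [hμ0, ← eigenvalue_eq_inner (hAh x) i0]
      refine aMat_posdef hker hH2 hgx Cg (hCg x) _ ?_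
      intro h0
      have hn := norm_eigenvector (hAh x) i0
      rw [h0] at hn
      simp at hn
    have hlowA : ∀ v : Euc d, μ0 * ‖v‖ ^ 2 ≤ ⟪v, mulVecE (aMat g p x) v⟫ :=
      quad_lower (hAh x) μ0 (fun i => hmin i (Finset.mem_univ i))
    set ε : ℝ := μ0 / (2 * (d * La + 1)) with hε
    have hεpos : 0 < ε := by
      apply div_pos hμ0pos
      positivity
    refine ⟨ε, hεpos, d * La / (2 * Real.sqrt (μ0 / 2)), ?_⟩
    set δ : ℝ := Real.sqrt (μ0 / 2) with hδ
    have hδpos : 0 < δ := Real.sqrt_pos.mpr (by linarith)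
    -- uniform lower bound for a(y) on the ball
    have hball : ∀ y ∈ Metric.ball x ε, ∀ v : Euc d, ‖v‖ = 1 →
        μ0 / 2 ≤ ⟪v, mulVecE (aMat g p y) v⟫ := by
      intro y hy v hv
      have hyd : ‖y - x‖ < ε := by
        rw [← dist_eq_norm]
        exact Metric.mem_ball.mp hy
      have hsplit : ⟪v, mulVecE (aMat g p y) v⟫ = ⟪v, mulVecE (aMat g p x) v⟫
          + ⟪v, mulVecE (aMat g p y - aMat g p x) v⟫ := by
        rw [mulVecE_sub, inner_sub_right]; ring
      have hd1 := quad_diff_bound La hLa0 hLa y x v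
      rw [hv] at hd1
      have hd2 : |⟪v, mulVecE (aMat g p y - aMat g p x) v⟫| ≤ d * (La * ‖y - x‖) := by
        simpa using hd1
      have hlow := hlowA v
      rw [hv] at hlow
      have hsmall : (d : ℝ) * (La * ‖y - x‖) ≤ μ0 / 2 := by
        have hdla : (0:ℝ) ≤ (d : ℝ) * La := by positivity
        have t1 : (d:ℝ) * La * ‖y - x‖ ≤ (d:ℝ) * La * ε :=
          mul_le_mul_of_nonneg_left hyd.le hdla
        have t2 : (d:ℝ) * La * ε ≤ ((d:ℝ) * La + 1) * ε :=
          mul_le_mul_of_nonneg_right (by linarith) hεpos.le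
        have hne : (0:ℝ) < (d:ℝ) * La + 1 := by positivity
        have h3 : ((d:ℝ) * La + 1) * ε = μ0 / 2 := by
          rw [hε]
          field_simp
        have hassoc : (d : ℝ) * (La * ‖y - x‖) = (d:ℝ) * La * ‖y - x‖ := by ring
        linarith
      have habs := abs_le.mp hd2
      linarith [hsplit, habs.1, hlow]
    -- lower bound on eigenvalues of σ y on the ball
    have hσlow : ∀ y ∈ Metric.ball x ε, ∀ v : Euc d, ‖v‖ = 1 →
        δ ≤ ⟪v, mulVecE (σ y) v⟫ := by
      intro y hy
      have heig : ∀ i, δ ≤ (hherm y).eigenvalues i := by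
        intro i
        set w := (hherm y).eigenvectorBasis i with hw
        have hwn : ‖w‖ = 1 := norm_eigenvector (hherm y) i
        set lam := (hherm y).eigenvalues i with hlam
        have hlam0 : 0 ≤ lam := (hσ y).1.eigenvalues_nonneg i
        have hsq : lam * lam = ⟪w, mulVecE (aMat g p y) w⟫ := by
          rw [← (hσ y).2, mulVecE_mul, mulVecE_eigen (hherm y) i, mulVecE_smul,
            real_inner_smul_right, mulVecE_eigen (hherm y) i, real_inner_smul_right,
            real_inner_self_eq_norm_sq, hwn]
          ring
        have hge := hball y hy w hwn
        rw [← hsq] at hge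
        have : δ ^ 2 ≤ lam ^ 2 := by
          rw [hδ, Real.sq_sqrt (by linarith : (0:ℝ) ≤ μ0 / 2)]
          nlinarith
        calc δ = Real.sqrt (δ ^ 2) := (Real.sqrt_sq hδpos.le).symm
          _ ≤ Real.sqrt (lam ^ 2) := Real.sqrt_le_sqrt this
          _ = lam := Real.sqrt_sq hlam0
      intro v hv
      have := quad_lower (hherm y) δ heig v
      rw [hv] at this
      simpa using this
    -- conclude with the key lemma
    intro y hy z hz k l
    have hq : ∀ v : Euc d, ‖v‖ = 1 →
        |⟪v, mulVecE (σ y * σ y - σ z * σ z) v⟫| ≤ d * (La * ‖y - z‖) := by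
      intro v hv
      rw [(hσ y).2, (hσ z).2]
      have := quad_diff_bound La hLa0 hLa y z v
      rw [hv] at this
      simpa using this
    have hkey := (key_lemma (σ y) (σ z) (hherm y) (hherm z)
      (d * (La * ‖y - z‖)) δ hδpos.le hq (hσlow y hy) (hσlow z hz) k l).2 hδpos
    calc |σ y k l - σ z k l| ≤ (d * (La * ‖y - z‖)) / (2 * δ) := hkey
      _ = d * La / (2 * Real.sqrt (μ0 / 2)) * ‖y - z‖ := by
          rw [hδ]; field_simp
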